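/- For the bi-delta moment-closure system, each eigenvalue field is linearly degenerate: for each eigenvalue λ⁽ᵏ⁾ = μᵢ with corresponding eigenvector r⁽ᵏ⁾ = (1, μᵢ, μᵢ², μᵢ³), one has ∇_U λ⁽ᵏ⁾ · r⁽ᵏ⁾ = 0, where the gradient is taken with respect to the conserved moments U = (M₀, M₁, M₂, M₃). -/

import Mathlib

/-- The bi-delta eigenvalue `μ = u + q/(2p) + s·√(p/ρ + (q/(2p))²)` (with sign `s = ∓1`)
viewed as a function of the conserved moments `U = (M₀, M₁, M₂, M₃)`, via the primitive
variable recovery `ρ = M₀`, `u = M₁/M₀`, `p = M₂ - ρu²`, `q = M₃ - ρu³ - 3pu`. -/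
noncomputable def biDeltaEigenvalue (s : ℝ) (V : Fin 4 → ℝ) : ℝ :=
  let ρ := V 0
  let u := V 1 / V 0
  let p := V 2 - ρ * u^2
  let q := V 3 - ρ * u^3 - 3 * p * u
  u + q/(2*p) + s * Real.sqrt (p/ρ + (q/(2*p))^2)

lemma biDelta_apply (s : ℝ) (V : Fin 4 → ℝ) :
    biDeltaEigenvalue s V =
      V 1 / V 0
      + (V 3 - V 0 * (V 1 / V 0)^3 - 3 * (V 2 - V 0 * (V 1 / V 0)^2) * (V 1 / V 0))
          / (2 * (V 2 - V 0 * (V 1 / V 0)^2))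
      + s * Real.sqrt ((V 2 - V 0 * (V 1 / V 0)^2) / V 0
          + ((V 3 - V 0 * (V 1 / V 0)^3 - 3 * (V 2 - V 0 * (V 1 / V 0)^2) * (V 1 / V 0))
              / (2 * (V 2 - V 0 * (V 1 / V 0)^2)))^2) := rfl

/-- On an exact bi-delta moment vector with weights `α, β > 0` at distinct nodes `μ, ν`,
the eigenvalue formula recovers the node `μ` (provided the sign `s` points to `μ`). -/
lemma biDelta_node (s α β μ ν : ℝ) (hα : 0 < α) (hβ : 0 < β) (hne : μ ≠ ν)
    (hsgn : s * |μ - ν| = μ - ν) :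
    biDeltaEigenvalue s ![α + β, α*μ + β*ν, α*μ^2 + β*ν^2, α*μ^3 + β*ν^3] = μ := by
  have hρ : (0:ℝ) < α + β := by linarith
  have hρ' : α + β ≠ 0 := hρ.ne'
  have hmn : μ - ν ≠ 0 := sub_ne_zero.mpr hne
  rw [biDelta_apply]
  simp only [Matrix.cons_val_zero, Matrix.cons_val_one, Matrix.head_cons,
    Matrix.cons_val_two, Matrix.tail_cons, Matrix.cons_val_three]
  have hP : α*μ^2 + β*ν^2 - (α+β) * ((α*μ + β*ν)/(α+β))^2 = α*β*(μ-ν)^2/(α+β) := by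
    field_simp; ring
  have hQ : α*μ^3 + β*ν^3 - (α+β) * ((α*μ + β*ν)/(α+β))^3
      - 3 * (α*μ^2 + β*ν^2 - (α+β) * ((α*μ + β*ν)/(α+β))^2) * ((α*μ + β*ν)/(α+β))
      = α*β*(β-α)*(μ-ν)^3/(α+β)^2 := by
    field_simp; ring
  rw [hQ, hP]
  have harg : α*β*(μ-ν)^2/(α+β) / (α+β)
      + (α*β*(β-α)*(μ-ν)^3/(α+β)^2 / (2 * (α*β*(μ-ν)^2/(α+β))))^2 = ((μ-ν)/2)^2 := by
    field_simp; ring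
  rw [harg, Real.sqrt_sq_eq_abs, abs_div, abs_two,
    show s * (|μ - ν| / 2) = s * |μ - ν| / 2 from (mul_div_assoc s _ 2).symm, hsgn]
  field_simp
  ring

lemma biDelta_ld (ρ u p q s : ℝ) (hρ : 0 < ρ) (hp : 0 < p) (hss : s = 1 ∨ s = -1) :
    fderiv ℝ (biDeltaEigenvalue s) ![ρ, ρ*u, ρ*u^2 + p, ρ*u^3 + 3*p*u + q]
      ![1, biDeltaEigenvalue s ![ρ, ρ*u, ρ*u^2 + p, ρ*u^3 + 3*p*u + q],
        (biDeltaEigenvalue s ![ρ, ρ*u, ρ*u^2 + p, ρ*u^3 + 3*p*u + q])^2,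
        (biDeltaEigenvalue s ![ρ, ρ*u, ρ*u^2 + p, ρ*u^3 + 3*p*u + q])^3] = 0 := by
  have hs2 : s^2 = 1 := by rcases hss with rfl | rfl <;> norm_num
  have hsne : s ≠ 0 := by rcases hss with rfl | rfl <;> norm_num
  have habs : |s| = 1 := by rcases hss with rfl | rfl <;> norm_num
  obtain ⟨a, ha⟩ : ∃ x : ℝ, x = q/(2*p) := ⟨_, rfl⟩
  have haq : q = 2*p*a := by rw [ha]; field_simp
  have hargpos : 0 < p/ρ + a^2 := by positivity
  obtain ⟨R, hRdef⟩ : ∃ x : ℝ, x = Real.sqrt (p/ρ + a^2) := ⟨_, rfl⟩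
  have hRpos : 0 < R := by rw [hRdef]; exact Real.sqrt_pos.mpr hargpos
  have hR2 : R^2 = p/ρ + a^2 := by rw [hRdef]; exact Real.sq_sqrt hargpos.le
  have hRne : R ≠ 0 := hRpos.ne'
  have hρR : ρ * R^2 = p + ρ * a^2 := by rw [hR2]; field_simp
  have ha2 : a^2 < R^2 := by rw [hR2]; have := div_pos hp hρ; linarith
  have hsa2 : (s*a)^2 < R^2 := by rw [mul_pow, hs2, one_mul]; exact ha2
  have h1 : s*a < R := lt_of_pow_lt_pow_left₀ 2 hRpos.le hsa2
  have h2 : -R < s*a := by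
    have h' : (-(s*a))^2 < R^2 := by rw [neg_pow]; simpa using hsa2
    have := lt_of_pow_lt_pow_left₀ 2 hRpos.le h'
    linarith
  set μ : ℝ := u + a + s*R with hμ
  set ν : ℝ := u + a - s*R with hν
  set α : ℝ := ρ*(1 - s*a/R)/2 with hα
  set β : ℝ := ρ*(1 + s*a/R)/2 with hβ
  have hsaR : s*a/R < 1 := (div_lt_one hRpos).mpr h1
  have hsaR' : -1 < s*a/R := by rw [lt_div_iff₀ hRpos]; linarith
  have hαpos : 0 < α := by rw [hα]; nlinarith
  have hβpos : 0 < β := by rw [hβ]; nlinarith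
  have hμν : μ - ν = 2*(s*R) := by rw [hμ, hν]; ring
  have hne : μ ≠ ν := by
    intro h
    have h0 : (2:ℝ)*(s*R) = 0 := by rw [← hμν, h, sub_self]
    have : s*R ≠ 0 := mul_ne_zero hsne hRne
    simpa [this] using h0
  have hsgn : s * |μ - ν| = μ - ν := by
    rw [hμν, abs_mul, abs_mul, abs_two, habs, abs_of_pos hRpos]
    ring
  have hM0 : ρ = α + β := by rw [hα, hβ]; ring
  have hM1 : ρ*u = α*μ + β*ν := by
    rw [hα, hβ, hμ, hν]
    field_simp
    linear_combination (2*R*a) * hs2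
  have hM2 : ρ*u^2 + p = α*μ^2 + β*ν^2 := by
    rw [hα, hβ, hμ, hν]
    field_simp
    linear_combination (-2*R) * hρR + (2*R*(2*ρ*a*(u+a) - ρ*R^2)) * hs2
  have hM3 : ρ*u^3 + 3*p*u + q = α*μ^3 + β*ν^3 := by
    rw [hα, hβ, hμ, hν]
    field_simp
    linear_combination (2*R) * haq + (2*R*(a - 3*(u+a))) * hρR
      + (2*R*(3*ρ*a*(u+a)^2 - 3*ρ*(u+a)*R^2 + ρ*a*R^2*(s^2+1))) * hs2
  have hU : (![ρ, ρ*u, ρ*u^2 + p, ρ*u^3 + 3*p*u + q] : Fin 4 → ℝ)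
      = ![α + β, α*μ + β*ν, α*μ^2 + β*ν^2, α*μ^3 + β*ν^3] := by
    rw [← hM0, ← hM1, ← hM2, ← hM3]
  rw [hU]
  have hval : biDeltaEigenvalue s ![α + β, α*μ + β*ν, α*μ^2 + β*ν^2, α*μ^3 + β*ν^3] = μ :=
    biDelta_node s α β μ ν hαpos hβpos hne hsgn
  rw [hval]
  set U₀ : Fin 4 → ℝ := ![α + β, α*μ + β*ν, α*μ^2 + β*ν^2, α*μ^3 + β*ν^3] with hU₀
  set r : Fin 4 → ℝ := ![1, μ, μ^2, μ^3] with hr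
  by_cases hd : DifferentiableAt ℝ (biDeltaEigenvalue s) U₀
  · have hline : HasDerivAt (fun t : ℝ => U₀ + t • r) r 0 := by
      simpa using ((hasDerivAt_id (0:ℝ)).smul_const r).const_add U₀
    have h00 : U₀ + (0:ℝ) • r = U₀ := by simp
    have hcomp : HasDerivAt (fun t : ℝ => biDeltaEigenvalue s (U₀ + t • r))
        (fderiv ℝ (biDeltaEigenvalue s) U₀ r) 0 := by
      have hf : HasFDerivAt (biDeltaEigenvalue s)
          (fderiv ℝ (biDeltaEigenvalue s) U₀) (U₀ + (0:ℝ) • r) := by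
        rw [h00]; exact hd.hasFDerivAt
      exact hf.comp_hasDerivAt 0 hline
    have hconst : (fun t : ℝ => biDeltaEigenvalue s (U₀ + t • r)) =ᶠ[nhds 0]
        (fun _ => μ) := by
      filter_upwards [eventually_gt_nhds (show -α < 0 by linarith)] with t ht
      have hUt : U₀ + t • r = ![(α+t) + β, (α+t)*μ + β*ν, (α+t)*μ^2 + β*ν^2,
          (α+t)*μ^3 + β*ν^3] := by
        funext k
        fin_cases k <;>
          simp [hU₀, hr, Pi.add_apply, Pi.smul_apply, smul_eq_mul] <;> ring
      rw [hUt]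
      exact biDelta_node s (α+t) β μ ν (by linarith) hβpos hne hsgn
    have hconst' : HasDerivAt (fun t : ℝ => biDeltaEigenvalue s (U₀ + t • r)) 0 0 :=
      (hasDerivAt_const (0:ℝ) μ).congr_of_eventuallyEq hconst
    exact hcomp.unique hconst'
  · rw [fderiv_zero_of_not_differentiableAt hd]
    simp

/-- linear degeneracy of the bi-delta closure: for each eigenvalue field
`λ = μᵢ(U)` with eigenvector `r = (1, μᵢ, μᵢ², μᵢ³)`, the directional derivative
`∇_U λ · r` vanishes. -/
theorem stmt_5 (ρ u p q : ℝ) (hρ : 0 < ρ) (hp : 0 < p)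
    (U₀ : Fin 4 → ℝ)
    (hU₀ : U₀ = ![ρ, ρ*u, ρ*u^2 + p, ρ*u^3 + 3*p*u + q]) :
    ∀ s ∈ ({-1, 1} : Set ℝ),
      fderiv ℝ (biDeltaEigenvalue s) U₀
        ![1, biDeltaEigenvalue s U₀, (biDeltaEigenvalue s U₀)^2,
          (biDeltaEigenvalue s U₀)^3] = 0 := by
  intro s hs
  subst hU₀
  have hss : s = 1 ∨ s = -1 := by
    simp only [Set.mem_insert_iff, Set.mem_singleton_iff] at hs
    tauto
  exact biDelta_ld ρ u p q s hρ hp hss
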